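/- Let G be a group with a finite symmetric generating set A, and suppose G equipped with its word metric d is Gromov hyperbolic, i.e. there exists δ ≥ 0 such that for all w, x, y, z ∈ G one has (x|y)_w ≥ min((x|z)_w, (y|z)_w) − δ, where (x|y)_w = ½(d(x,w) + d(y,w) − d(x,y)) is the Gromov product. Then G has only finitely many cone types: the set {C(g) : g ∈ G} is finite. -/
import Mathlib
set_option linter.all false

/-- Word length of `x` in a group `G` with respect to a generating set `A`. -/
noncomputable def wlOf {G : Type*} [Group G] (A : Set G) (x : G) : ℕ :=
  sInf {n : ℕ | ∃ w : List G, w.length = n ∧ (∀ l ∈ w, l ∈ A) ∧ w.prod = x}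

/-- The word metric `d(x,y) = |x⁻¹y|`. -/
noncomputable def dOf {G : Type*} [Group G] (A : Set G) (x y : G) : ℕ :=
  wlOf A (x⁻¹ * y)

/-- The Gromov product `(x|y)_w = ½(d(x,w) + d(y,w) − d(x,y))`. -/
noncomputable def gromovProd {G : Type*} [Group G] (A : Set G) (w x y : G) : ℝ :=
  ((dOf A x w : ℝ) + (dOf A y w : ℝ) - (dOf A x y : ℝ)) / 2

/-- The cone type of `g`: the set of `h` with `|gh| = |g| + |h|`. -/
def coneTypeOf {G : Type*} [Group G] (A : Set G) (g : G) : Set G :=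
  {h | wlOf A (g * h) = wlOf A g + wlOf A h}

section Aux

variable {G : Type*} [Group G] {A : Set G}

lemma exists_word (hsymm : ∀ a ∈ A, a⁻¹ ∈ A) (hgen : Subgroup.closure A = ⊤) (x : G) :
    ∃ w : List G, (∀ l ∈ w, l ∈ A) ∧ w.prod = x := by
  have hx : x ∈ (Subgroup.closure A).toSubmonoid := by rw [hgen]; trivial
  rw [Subgroup.closure_toSubmonoid] at hx
  obtain ⟨w, hw, hp⟩ := Submonoid.exists_list_of_mem_closure hx
  refine ⟨w, fun l hl => ?_, hp⟩
  rcases hw l hl with h | h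
  · exact h
  · simpa using hsymm _ (Set.mem_inv.mp h)

lemma wl_spec (hsymm : ∀ a ∈ A, a⁻¹ ∈ A) (hgen : Subgroup.closure A = ⊤) (x : G) :
    ∃ w : List G, w.length = wlOf A x ∧ (∀ l ∈ w, l ∈ A) ∧ w.prod = x := by
  have hne : {n : ℕ | ∃ w : List G, w.length = n ∧ (∀ l ∈ w, l ∈ A) ∧ w.prod = x}.Nonempty := by
    obtain ⟨w, hw, hp⟩ := exists_word hsymm hgen x
    exact ⟨w.length, w, rfl, hw, hp⟩
  exact Nat.sInf_mem hne

lemma wl_le {w : List G} (hw : ∀ l ∈ w, l ∈ A) : wlOf A w.prod ≤ w.length :=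
  Nat.sInf_le ⟨w, rfl, hw, rfl⟩

lemma wl_one : wlOf A (1 : G) = 0 :=
  Nat.le_antisymm (by simpa using wl_le (A := A) (w := []) (by simp)) (Nat.zero_le _)

lemma wl_eq_zero (hsymm : ∀ a ∈ A, a⁻¹ ∈ A) (hgen : Subgroup.closure A = ⊤) {x : G}
    (hx : wlOf A x = 0) : x = 1 := by
  obtain ⟨w, hlen, _, hp⟩ := wl_spec hsymm hgen x
  rw [hx, List.length_eq_zero_iff] at hlen
  simpa [hlen] using hp.symm

lemma wl_mul_le (hsymm : ∀ a ∈ A, a⁻¹ ∈ A) (hgen : Subgroup.closure A = ⊤) (x y : G) :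
    wlOf A (x * y) ≤ wlOf A x + wlOf A y := by
  obtain ⟨w, hlen, hw, hp⟩ := wl_spec hsymm hgen x
  obtain ⟨v, hlen', hv, hp'⟩ := wl_spec hsymm hgen y
  have := wl_le (A := A) (w := w ++ v) (by
    intro l hl; rcases List.mem_append.mp hl with h | h
    exacts [hw l h, hv l h])
  simpa [hp, hp', hlen, hlen'] using this

lemma wl_inv (hsymm : ∀ a ∈ A, a⁻¹ ∈ A) (hgen : Subgroup.closure A = ⊤) (x : G) :
    wlOf A x⁻¹ = wlOf A x := by
  have key : ∀ z : G, wlOf A z⁻¹ ≤ wlOf A z := by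
    intro z
    obtain ⟨w, hlen, hw, hp⟩ := wl_spec hsymm hgen z
    have := wl_le (A := A) (w := (w.map fun a => a⁻¹).reverse) (by
      intro l hl
      simp only [List.mem_reverse, List.mem_map] at hl
      obtain ⟨a, ha, rfl⟩ := hl
      exact hsymm a (hw a ha))
    rw [← List.prod_inv_reverse, hp] at this
    simpa [hlen] using this
  exact Nat.le_antisymm (key x) (by simpa using key x⁻¹)

set_option maxHeartbeats 1000000 in
/-- Key lemma (Cannon): if two elements have the same
`(⌈2δ⌉+2)`-ball profile, then their cone types coincide (one inclusion). -/
lemma cone_subset (hsymm : ∀ a ∈ A, a⁻¹ ∈ A) (hgen : Subgroup.closure A = ⊤)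
    {δ : ℝ} (hδ : 0 ≤ δ)
    (hyp : ∀ w x y z : G,
      gromovProd A w x y ≥ min (gromovProd A w x z) (gromovProd A w y z) - δ)
    (g g' : G)
    (hφ : ∀ y : G, wlOf A y ≤ ⌈2 * δ⌉₊ + 2 →
      wlOf A (g * y) + wlOf A g' = wlOf A (g' * y) + wlOf A g) :
    coneTypeOf A g ⊆ coneTypeOf A g' := by
  suffices H : ∀ n : ℕ, ∀ h : G, wlOf A h = n → h ∈ coneTypeOf A g → h ∈ coneTypeOf A g' by
    intro h hh; exact H (wlOf A h) h rfl hh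
  intro n
  induction n using Nat.strong_induction_on with
  | _ n ih =>
    intro h hn hh
    match n, hn with
    | 0, hn =>
      have : h = 1 := wl_eq_zero hsymm hgen hn
      simp [coneTypeOf, this, wl_one]
    | (m + 1), hn =>
      -- decompose h = h' * a with |h'| = m, |a| = 1
      obtain ⟨u, hulen, hu, hup⟩ := wl_spec hsymm hgen h
      rw [hn] at hulen
      set h' : G := (u.take m).prod with hh'
      set a : G := (u.drop m).prod with ha
      have hsplit : h' * a = h := by
        rw [hh', ha, ← List.prod_append, List.take_append_drop, hup]
      have hth : (u.take m).length = m := by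
        rw [List.length_take, hulen]; omega
      have hdh : (u.drop m).length = 1 := by
        rw [List.length_drop, hulen]; omega
      have hwh' : wlOf A h' ≤ m := by
        have := wl_le (A := A) (w := u.take m) (fun l hl => hu l (List.mem_of_mem_take hl))
        rwa [hth] at this
      have hwa : wlOf A a ≤ 1 := by
        have := wl_le (A := A) (w := u.drop m) (fun l hl => hu l (List.mem_of_mem_drop hl))
        rwa [hdh] at this
      have hhle : m + 1 ≤ wlOf A h' + wlOf A a := by
        have := wl_mul_le hsymm hgen h' a
        rw [hsplit, hn] at this; omega
      have hwh'e : wlOf A h' = m := by omega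
      have hwae : wlOf A a = 1 := by omega
      -- h' ∈ C(g)
      have hh'g : h' ∈ coneTypeOf A g := by
        have h1 : wlOf A (g * h') ≤ wlOf A g + m := by
          have := wl_mul_le hsymm hgen g h'; omega
        have h2 : wlOf A (g * h) ≤ wlOf A (g * h') + wlOf A a := by
          have := wl_mul_le hsymm hgen (g * h') a
          rwa [mul_assoc, hsplit] at this
        have hghn : wlOf A (g * h) = wlOf A g + (m + 1) := by
          have := hh; simp only [coneTypeOf, Set.mem_setOf_eq] at this; omega
        simp only [coneTypeOf, Set.mem_setOf_eq]; omega
      have hh'g' : h' ∈ coneTypeOf A g' := ih m (by omega) h' hwh'e hh'g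
      -- main argument by contradiction
      by_contra hc
      simp only [coneTypeOf, Set.mem_setOf_eq, hn] at hc hh
      set n' : ℕ := wlOf A g' with hn'
      set L : ℕ := wlOf A (g' * h) with hL
      have hLle : L ≤ n' + (m + 1) := by
        have := wl_mul_le hsymm hgen g' h
        rw [hn] at this; exact this
      have hLlt : L ≤ n' + m := by omega
      have hg'h' : wlOf A (g' * h') = n' + m := by
        simpa [coneTypeOf, hwh'e] using hh'g'
      have hLge : n' + m ≤ L + 1 := by
        have hgha : g' * h' = (g' * h) * a⁻¹ := by rw [← hsplit]; group
        have h2 := wl_mul_le hsymm hgen (g' * h) a⁻¹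
        rw [← hgha, wl_inv hsymm hgen, hwae] at h2
        omega
      -- n' ≥ 1 (otherwise g' = 1 and no contradiction)
      have hn'pos : 1 ≤ n' := by
        by_contra hn0
        have hg1 : g' = 1 := wl_eq_zero hsymm hgen (by omega)
        refine hc ?_
        show wlOf A (g' * h) = wlOf A g' + (m + 1)
        rw [hg1, one_mul, wl_one, hn, zero_add]
      have hmL : m ≤ L := by omega
      -- geodesic for g'h, split at t = L - m
      obtain ⟨w, hwlen, hw, hwp⟩ := wl_spec hsymm hgen (g' * h)
      rw [← hL] at hwlen
      set t : ℕ := L - m with htdef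
      have htm : t + m = L := by omega
      set p : G := (w.take t).prod with hp
      set s : G := (w.drop t).prod with hs
      have hps : p * s = g' * h := by
        rw [hp, hs, ← List.prod_append, List.take_append_drop, hwp]
      have htake : (w.take t).length = t := by rw [List.length_take, hwlen]; omega
      have hdrop : (w.drop t).length = m := by rw [List.length_drop, hwlen]; omega
      have hwp' : wlOf A p ≤ t := by
        have := wl_le (A := A) (w := w.take t) (fun l hl => hw l (List.mem_of_mem_take hl))
        rwa [htake] at this
      have hws' : wlOf A s ≤ m := by
        have := wl_le (A := A) (w := w.drop t) (fun l hl => hw l (List.mem_of_mem_drop hl))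
        rwa [hdrop] at this
      have hLps : L ≤ wlOf A p + wlOf A s := by
        have := wl_mul_le hsymm hgen p s
        rw [hps, ← hL] at this; omega
      have hwpe : wlOf A p = t := by omega
      have hwse : wlOf A s = m := by omega
      have hseq : s = p⁻¹ * (g' * h) := by rw [← hps]; group
      -- hyperbolicity: D := d(g', p) ≤ 2δ + 2
      set D : ℕ := wlOf A (g'⁻¹ * p) with hD
      have hmin := hyp 1 g' p (g' * h)
      have e1 : dOf A g' 1 = n' := by
        simp only [dOf, mul_one]; rw [wl_inv hsymm hgen]
      have e2 : dOf A p 1 = t := by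
        simp only [dOf, mul_one]; rw [wl_inv hsymm hgen, hwpe]
      have e3 : dOf A (g' * h) 1 = L := by
        simp only [dOf, mul_one]; rw [wl_inv hsymm hgen, ← hL]
      have e4 : dOf A g' p = D := rfl
      have e5 : dOf A g' (g' * h) = m + 1 := by
        simp only [dOf, inv_mul_cancel_left]; rw [hn]
      have e6 : dOf A p (g' * h) = m := by
        simp only [dOf]; rw [← hseq, hwse]
      simp only [gromovProd, e1, e2, e3, e4, e5, e6] at hmin
      have c1 : (n' : ℝ) + m ≤ (L : ℝ) + 1 := by exact_mod_cast hLge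
      have c2 : (t : ℝ) + m = (L : ℝ) := by exact_mod_cast htm
      have c3 : (t : ℝ) ≤ n' := by
        have : t ≤ n' := by omega
        exact_mod_cast this
      have c4 : (n' : ℝ) - 1 ≤ t := by
        have : n' ≤ t + 1 := by omega
        have : (n' : ℝ) ≤ (t : ℝ) + 1 := by exact_mod_cast this
        linarith
      have hminlb : (n' : ℝ) - 1 ≤
          min (((n' : ℝ) + L - (m + 1)) / 2) (((t : ℝ) + L - m) / 2) :=
        le_min (by push_cast; linarith) (by push_cast; linarith)
      have hDreal : (D : ℝ) ≤ 2 * δ + 2 := by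
        push_cast at hmin; linarith
      have hDk : D ≤ ⌈2 * δ⌉₊ + 2 := by
        have hcl : (D : ℝ) ≤ ((⌈2 * δ⌉₊ + 2 : ℕ) : ℝ) := by
          push_cast
          have := Nat.le_ceil (2 * δ); linarith
        exact_mod_cast hcl
      -- use the profile hypothesis at y = g'⁻¹ p
      have hy := hφ (g'⁻¹ * p) hDk
      have hg'y : g' * (g'⁻¹ * p) = p := by group
      rw [hg'y, hwpe] at hy
      -- final contradiction
      have hfin2 : wlOf A (g * h) ≤ wlOf A (g * (g'⁻¹ * p)) + m := by
        have hcomp : g * h = (g * (g'⁻¹ * p)) * s := by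
          rw [hseq]; group
        have := wl_mul_le hsymm hgen (g * (g'⁻¹ * p)) s
        rw [← hcomp, hwse] at this; exact this
      omega

end Aux

set_option maxHeartbeats 1000000 in
/-- Cannon: a group with a finite symmetric generating set which is
Gromov hyperbolic for the word metric has only finitely many cone types. -/
theorem stmt17 (G : Type*) [Group G] (A : Set G) (hfin : A.Finite)
    (hsymm : ∀ a ∈ A, a⁻¹ ∈ A) (hgen : Subgroup.closure A = ⊤)
    (hyp : ∃ δ : ℝ, 0 ≤ δ ∧ ∀ w x y z : G,
      gromovProd A w x y ≥ min (gromovProd A w x z) (gromovProd A w y z) - δ) :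
    {s : Set G | ∃ g : G, s = coneTypeOf A g}.Finite := by
  classical
  obtain ⟨δ, hδ, hhyp⟩ := hyp
  set k : ℕ := ⌈2 * δ⌉₊ + 2 with hk
  -- the ball of radius k is finite
  have hAfin := hfin.to_subtype
  have hlists : {w : List ↥A | w.length ≤ k}.Finite := List.finite_length_le _ k
  have hB : {y : G | wlOf A y ≤ k}.Finite := by
    apply Set.Finite.subset (hlists.image fun w : List ↥A => (w.map Subtype.val).prod)
    intro y hy
    obtain ⟨w, hlen, hw, hp⟩ := wl_spec hsymm hgen y
    refine ⟨w.pmap Subtype.mk hw, ?_, ?_⟩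
    · simp only [Set.mem_setOf_eq, List.length_pmap]
      rw [hlen]; exact hy
    · simp only [List.map_pmap]
      rw [List.pmap_eq_map]
      simpa using hp
  have : Finite ↥{y : G | wlOf A y ≤ k} := hB.to_subtype
  -- the profile map
  set Φ : G → (↥{y : G | wlOf A y ≤ k} → ℤ) :=
    fun g y => (wlOf A (g * y.1) : ℤ) - (wlOf A g : ℤ) with hΦ
  have hrange : (Set.range Φ).Finite := by
    apply Set.Finite.subset (Set.Finite.pi (fun _ => Set.finite_Icc (-(k : ℤ)) (k : ℤ)))
    rintro f ⟨g, rfl⟩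
    intro y _
    simp only [Set.mem_Icc, hΦ]
    have h1 : wlOf A (g * y.1) ≤ wlOf A g + wlOf A y.1 := wl_mul_le hsymm hgen g y.1
    have h2 : wlOf A g ≤ wlOf A (g * y.1) + wlOf A y.1 := by
      have := wl_mul_le hsymm hgen (g * y.1) y.1⁻¹
      rw [mul_inv_cancel_right, wl_inv hsymm hgen] at this
      exact this
    have h3 : wlOf A y.1 ≤ k := y.2
    omega
  -- cone types are determined by the profile
  have key : ∀ g g' : G, Φ g = Φ g' → coneTypeOf A g = coneTypeOf A g' := by
    intro g g' hgg'
    have hboth : ∀ y : G, wlOf A y ≤ ⌈2 * δ⌉₊ + 2 →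
        wlOf A (g * y) + wlOf A g' = wlOf A (g' * y) + wlOf A g := by
      intro y hyk
      have := congrFun hgg' ⟨y, hyk⟩
      simp only [hΦ] at this
      omega
    refine Set.Subset.antisymm (cone_subset hsymm hgen hδ hhyp g g' hboth)
      (cone_subset hsymm hgen hδ hhyp g' g (fun y hyk => (hboth y hyk).symm))
  -- conclude
  have hsub : {s : Set G | ∃ g : G, s = coneTypeOf A g} ⊆
      (fun f => if hf : ∃ g : G, Φ g = f then coneTypeOf A hf.choose else ∅) '' Set.range Φ := by
    rintro s ⟨g, rfl⟩
    have hex : ∃ g' : G, Φ g' = Φ g := ⟨g, rfl⟩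
    refine ⟨Φ g, ⟨g, rfl⟩, ?_⟩
    dsimp only
    rw [dif_pos hex]
    exact key _ _ hex.choose_spec
  exact (hrange.image _).subset hsub
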